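/- arXiv:2605.13513 — 2 statements merged into one kernel-verified Lean document; each statement's English description precedes it below -/
import Mathlib

section
/- For nonnegative reals a₁, a₂, b₁, b₂, setting z₁ = √((a₁²+b₁²)/2) and z₂ = √((a₂²+b₂²)/2), one has |z₁ − z₂|² ≤ ½|a₁−a₂|² + ½|b₁−b₂|², with equality only if a₁b₂ = a₂b₁. -/
/-- hidden-convexity inequality with equality case. -/
theorem hidden_convexity (a₁ a₂ b₁ b₂ : ℝ)
    (ha₁ : 0 ≤ a₁) (ha₂ : 0 ≤ a₂) (hb₁ : 0 ≤ b₁) (hb₂ : 0 ≤ b₂) :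
    |Real.sqrt ((a₁ ^ 2 + b₁ ^ 2) / 2) - Real.sqrt ((a₂ ^ 2 + b₂ ^ 2) / 2)| ^ 2
        ≤ (1 / 2) * |a₁ - a₂| ^ 2 + (1 / 2) * |b₁ - b₂| ^ 2 ∧
      (|Real.sqrt ((a₁ ^ 2 + b₁ ^ 2) / 2) - Real.sqrt ((a₂ ^ 2 + b₂ ^ 2) / 2)| ^ 2
          = (1 / 2) * |a₁ - a₂| ^ 2 + (1 / 2) * |b₁ - b₂| ^ 2 → a₁ * b₂ = a₂ * b₁) := by
  set S₁ := (a₁ ^ 2 + b₁ ^ 2) / 2 with hS₁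
  set S₂ := (a₂ ^ 2 + b₂ ^ 2) / 2 with hS₂
  have hS₁0 : 0 ≤ S₁ := by positivity
  have hS₂0 : 0 ≤ S₂ := by positivity
  have hsq₁ : Real.sqrt S₁ ^ 2 = S₁ := Real.sq_sqrt hS₁0
  have hsq₂ : Real.sqrt S₂ ^ 2 = S₂ := Real.sq_sqrt hS₂0
  have hmul : Real.sqrt S₁ * Real.sqrt S₂ = Real.sqrt (S₁ * S₂) :=
    (Real.sqrt_mul hS₁0 S₂).symm
  have hsqm : Real.sqrt (S₁ * S₂) ^ 2 = S₁ * S₂ := Real.sq_sqrt (by positivity)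
  have e : (Real.sqrt S₁ - Real.sqrt S₂) ^ 2 = S₁ + S₂ - 2 * Real.sqrt (S₁ * S₂) := by
    rw [sub_sq, hsq₁, hsq₂, mul_assoc, hmul]; ring
  have hkey : (a₁ * a₂ + b₁ * b₂) / 2 ≤ Real.sqrt (S₁ * S₂) := by
    have h : ((a₁ * a₂ + b₁ * b₂) / 2) ^ 2 ≤ S₁ * S₂ := by
      rw [hS₁, hS₂]; nlinarith [sq_nonneg (a₁ * b₂ - a₂ * b₁)]
    have h0 : (0:ℝ) ≤ (a₁ * a₂ + b₁ * b₂) / 2 := by positivity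
    exact (Real.le_sqrt h0 (by positivity)).mpr h
  constructor
  · rw [sq_abs, sq_abs, sq_abs, e, hS₁, hS₂]
    nlinarith [hkey]
  · intro heq
    rw [sq_abs, sq_abs, sq_abs, e, hS₁, hS₂] at heq
    have h1 : Real.sqrt (S₁ * S₂) = (a₁ * a₂ + b₁ * b₂) / 2 := by
      linear_combination (-1/2 : ℝ) * heq
    have h2 : S₁ * S₂ = ((a₁ * a₂ + b₁ * b₂) / 2) ^ 2 := by
      rw [← hsqm, h1]
    rw [hS₁, hS₂] at h2
    have h3 : (a₁ * b₂ - a₂ * b₁) ^ 2 = 0 := by linear_combination 4 * h2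
    have := pow_eq_zero_iff (n := 2) (by norm_num) |>.mp h3
    linarith [this]
end

section
/- Let u ∈ H(Ω) and write u = u⁺ − u⁻ with u⁺u⁻ = 0. Then E_L(u, u⁺) ≥ E_L(u⁺, u⁺), where E_L(u,v) = (c_N/2)∬_{|x−y|≤1} (u(x)−u(y))(v(x)−v(y))/|x−y|^N dx dy − c_N ∬_{|x−y|≥1} u(x)v(y)/|x−y|^N dx dy + ρ_N ∫ u v. -/
open MeasureTheory

noncomputable def cLog (N : ℕ) : ℝ := Real.pi ^ (-(N : ℝ) / 2) * Real.Gamma ((N : ℝ) / 2)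

/-- Near-field bilinear form `E(u,v)`. -/
noncomputable def nearForm (N : ℕ) (u v : EuclideanSpace ℝ (Fin N) → ℝ) : ℝ :=
  (cLog N / 2) *
    ∫ x, ∫ y, (if ‖x - y‖ ≤ 1 then (u x - u y) * (v x - v y) / ‖x - y‖ ^ N else 0)

/-- Far-field term. -/
noncomputable def farForm (N : ℕ) (u v : EuclideanSpace ℝ (Fin N) → ℝ) : ℝ :=
  cLog N * ∫ x, ∫ y, (if 1 ≤ ‖x - y‖ then u x * v y / ‖x - y‖ ^ N else 0)

/-- The bilinear form `E_L` of the Logarithmic Laplacian (`ρ` stands for `ρ_N`). -/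
noncomputable def logLapForm (N : ℕ) (ρ : ℝ) (u v : EuclideanSpace ℝ (Fin N) → ℝ) : ℝ :=
  nearForm N u v - farForm N u v + ρ * ∫ x, u x * v x

lemma cLog_nonneg (N : ℕ) : 0 ≤ cLog N :=
  mul_nonneg (Real.rpow_nonneg (le_of_lt Real.pi_pos) _)
    (Real.Gamma_nonneg_of_nonneg (by positivity))

lemma abs_posPart_sub_le (a b : ℝ) : |max a 0 - max b 0| ≤ |a - b| :=
  abs_max_sub_max_le_abs a b 0

lemma key_ineq (a b : ℝ) : (max a 0 - max b 0) ^ 2 ≤ (a - b) * (max a 0 - max b 0) := by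
  rcases le_total a 0 with ha | ha <;> rcases le_total b 0 with hb | hb <;>
    simp [max_eq_left, max_eq_right, ha, hb] <;> nlinarith

lemma div_le_div_nonneg_den {a b d : ℝ} (h : a ≤ b) (hd : 0 ≤ d) : a / d ≤ b / d := by
  rcases hd.eq_or_lt with h0 | h0
  · simp [← h0]
  · exact div_le_div_of_nonneg_right h h0.le

/-- for `u ∈ H(Ω)`, writing `u⁺ = max(u,0)`, one has
`E_L(u, u⁺) ≥ E_L(u⁺, u⁺)`. -/
theorem logLapForm_posPart (N : ℕ) (ρ : ℝ) (Ω : Set (EuclideanSpace ℝ (Fin N)))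
    (hΩb : Bornology.IsBounded Ω) (hΩm : MeasurableSet Ω)
    (u : EuclideanSpace ℝ (Fin N) → ℝ)
    (hu2 : MemLp u 2 volume) (hu0 : ∀ x ∉ Ω, u x = 0)
    (hseminorm : Integrable
      (fun p : EuclideanSpace ℝ (Fin N) × EuclideanSpace ℝ (Fin N) =>
        if ‖p.1 - p.2‖ ≤ 1 then (u p.1 - u p.2) ^ 2 / ‖p.1 - p.2‖ ^ N else 0)
      (volume.prod volume)) :
    logLapForm N ρ u (fun x => max (u x) 0) ≥
      logLapForm N ρ (fun x => max (u x) 0) (fun x => max (u x) 0) := by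
  classical
  set up : EuclideanSpace ℝ (Fin N) → ℝ := fun x => max (u x) 0 with hup_def
  have hcN : 0 ≤ cLog N := cLog_nonneg N
  have hum : AEStronglyMeasurable u volume := hu2.aestronglyMeasurable
  have hupm : AEStronglyMeasurable up volume := hum.sup aestronglyMeasurable_const
  -- integrability of u
  haveI : IsFiniteMeasure (volume.restrict Ω) :=
    ⟨by rw [Measure.restrict_apply_univ]; exact hΩb.measure_lt_top⟩
  have huΩ : IntegrableOn u Ω volume := (hu2.restrict Ω).integrable one_le_two
  have huint : Integrable u volume := by
    have heq : u = Ω.indicator u := by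
      funext x
      by_cases hx : x ∈ Ω <;> simp [Set.indicator_apply, hx, hu0 x]
    rw [heq]
    exact (integrable_indicator_iff hΩm).2 huΩ
  have hup_le : ∀ x, ‖up x‖ ≤ ‖u x‖ := by
    intro x
    rcases le_total (u x) 0 with h | h <;>
      simp [hup_def, max_eq_left, max_eq_right, h, Real.norm_eq_abs, abs_le, abs_nonneg,
        abs_of_nonneg, abs_of_nonpos]
  have hupint : Integrable up volume :=
    huint.mono hupm (Filter.Eventually.of_forall hup_le)
  -- measurability of the kernels on the product space
  have hnormm : Measurable fun p : (EuclideanSpace ℝ (Fin N)) × (EuclideanSpace ℝ (Fin N)) => ‖p.1 - p.2‖ :=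
    (continuous_fst.sub continuous_snd).norm.measurable
  have hsle : MeasurableSet {p : (EuclideanSpace ℝ (Fin N)) × (EuclideanSpace ℝ (Fin N)) | ‖p.1 - p.2‖ ≤ 1} :=
    measurableSet_le hnormm measurable_const
  have hsge : MeasurableSet {p : (EuclideanSpace ℝ (Fin N)) × (EuclideanSpace ℝ (Fin N)) | 1 ≤ ‖p.1 - p.2‖} :=
    measurableSet_le measurable_const hnormm
  have hpowm : AEStronglyMeasurable (fun p : (EuclideanSpace ℝ (Fin N)) × (EuclideanSpace ℝ (Fin N)) => ‖p.1 - p.2‖ ^ N)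
      (volume.prod volume) := (hnormm.pow_const N).aestronglyMeasurable
  have haesm_near : ∀ v w : EuclideanSpace ℝ (Fin N) → ℝ, AEStronglyMeasurable v volume →
      AEStronglyMeasurable w volume →
      AEStronglyMeasurable
        (fun p : (EuclideanSpace ℝ (Fin N)) × (EuclideanSpace ℝ (Fin N)) =>
          if ‖p.1 - p.2‖ ≤ 1 then (v p.1 - v p.2) * (w p.1 - w p.2) / ‖p.1 - p.2‖ ^ N else 0)
        (volume.prod volume) := by
    intro v w hv hw
    have h1 : AEStronglyMeasurable
        (fun p : (EuclideanSpace ℝ (Fin N)) × (EuclideanSpace ℝ (Fin N)) => (v p.1 - v p.2) * (w p.1 - w p.2) / ‖p.1 - p.2‖ ^ N)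
        (volume.prod volume) :=
      by simpa [div_eq_mul_inv, Pi.mul_def, Pi.sub_def, Pi.inv_def] using
        ((hv.comp_fst.sub hv.comp_snd).mul (hw.comp_fst.sub hw.comp_snd)).mul
          ((hnormm.pow_const N).inv.aestronglyMeasurable)
    have := h1.indicator hsle
    convert this using 1
    funext p
    simp [Set.indicator_apply]
  have haesm_far : ∀ v w : EuclideanSpace ℝ (Fin N) → ℝ, AEStronglyMeasurable v volume →
      AEStronglyMeasurable w volume →
      AEStronglyMeasurable
        (fun p : (EuclideanSpace ℝ (Fin N)) × (EuclideanSpace ℝ (Fin N)) =>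
          if 1 ≤ ‖p.1 - p.2‖ then v p.1 * w p.2 / ‖p.1 - p.2‖ ^ N else 0)
        (volume.prod volume) := by
    intro v w hv hw
    have h1 : AEStronglyMeasurable
        (fun p : (EuclideanSpace ℝ (Fin N)) × (EuclideanSpace ℝ (Fin N)) => v p.1 * w p.2 / ‖p.1 - p.2‖ ^ N) (volume.prod volume) :=
      by simpa [div_eq_mul_inv, Pi.mul_def, Pi.sub_def, Pi.inv_def] using
        ((hv.comp_fst).mul (hw.comp_snd)).mul ((hnormm.pow_const N).inv.aestronglyMeasurable)
    have := h1.indicator hsge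
    convert this using 1
    funext p
    simp [Set.indicator_apply]
  -- near-field integrands
  set f : (EuclideanSpace ℝ (Fin N)) × (EuclideanSpace ℝ (Fin N)) → ℝ := fun p =>
    if ‖p.1 - p.2‖ ≤ 1 then (u p.1 - u p.2) * (up p.1 - up p.2) / ‖p.1 - p.2‖ ^ N else 0
    with hf_def
  set g : (EuclideanSpace ℝ (Fin N)) × (EuclideanSpace ℝ (Fin N)) → ℝ := fun p =>
    if ‖p.1 - p.2‖ ≤ 1 then (up p.1 - up p.2) * (up p.1 - up p.2) / ‖p.1 - p.2‖ ^ N else 0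
    with hg_def
  have hfint : Integrable f (volume.prod volume) := by
    refine hseminorm.mono (haesm_near u up hum hupm) (Filter.Eventually.of_forall fun p => ?_)
    simp only [hf_def]
    by_cases h : ‖p.1 - p.2‖ ≤ 1
    · simp only [h, if_true]
      have hd : (0:ℝ) ≤ ‖p.1 - p.2‖ ^ N := by positivity
      rw [Real.norm_eq_abs, Real.norm_eq_abs, abs_div, abs_div, abs_of_nonneg hd]
      refine div_le_div_nonneg_den ?_ hd
      rw [abs_mul, abs_pow, sq]
      exact mul_le_mul_of_nonneg_left (abs_posPart_sub_le _ _) (abs_nonneg _)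
    · simp [h]
  have hgint : Integrable g (volume.prod volume) := by
    refine hseminorm.mono (haesm_near up up hupm hupm) (Filter.Eventually.of_forall fun p => ?_)
    simp only [hg_def]
    by_cases h : ‖p.1 - p.2‖ ≤ 1
    · simp only [h, if_true]
      have hd : (0:ℝ) ≤ ‖p.1 - p.2‖ ^ N := by positivity
      rw [Real.norm_eq_abs, Real.norm_eq_abs, abs_div, abs_div, abs_of_nonneg hd]
      refine div_le_div_nonneg_den ?_ hd
      rw [abs_mul, abs_pow, sq]
      exact mul_le_mul (abs_posPart_sub_le _ _) (abs_posPart_sub_le _ _)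
        (abs_nonneg _) (abs_nonneg _)
    · simp [h]
  have hgf : ∀ p, g p ≤ f p := by
    intro p
    simp only [hf_def, hg_def]
    by_cases h : ‖p.1 - p.2‖ ≤ 1
    · simp only [h, if_true]
      refine div_le_div_nonneg_den ?_ (by positivity)
      have := key_ineq (u p.1) (u p.2)
      nlinarith [this]
    · simp [h]
  have hnear : nearForm N up up ≤ nearForm N u up := by
    unfold nearForm
    refine mul_le_mul_of_nonneg_left ?_ (by linarith)
    rw [integral_integral hgint, integral_integral hfint]
    exact integral_mono hgint hfint hgf
  -- far-field integrands
  set F1 : (EuclideanSpace ℝ (Fin N)) × (EuclideanSpace ℝ (Fin N)) → ℝ := fun p =>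
    if 1 ≤ ‖p.1 - p.2‖ then u p.1 * up p.2 / ‖p.1 - p.2‖ ^ N else 0 with hF1_def
  set F2 : (EuclideanSpace ℝ (Fin N)) × (EuclideanSpace ℝ (Fin N)) → ℝ := fun p =>
    if 1 ≤ ‖p.1 - p.2‖ then up p.1 * up p.2 / ‖p.1 - p.2‖ ^ N else 0 with hF2_def
  have hdomint : Integrable (fun p : (EuclideanSpace ℝ (Fin N)) × (EuclideanSpace ℝ (Fin N)) => ‖u p.1‖ * ‖up p.2‖) (volume.prod volume) :=
    huint.norm.mul_prod hupint.norm
  have hfarbound : ∀ (a : ℝ) (p : (EuclideanSpace ℝ (Fin N)) × (EuclideanSpace ℝ (Fin N))), |a| ≤ ‖u p.1‖ →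
      ‖if 1 ≤ ‖p.1 - p.2‖ then a * up p.2 / ‖p.1 - p.2‖ ^ N else 0‖ ≤
        ‖‖u p.1‖ * ‖up p.2‖‖ := by
    intro a p ha
    simp only [Real.norm_eq_abs] at ha ⊢
    by_cases h : 1 ≤ ‖p.1 - p.2‖
    · simp only [h, if_true, abs_div]
      have h2 : |a * up p.2| / |‖p.1 - p.2‖ ^ N| ≤ |a * up p.2| :=
        div_le_self (abs_nonneg _) (by rw [abs_of_nonneg (by positivity)]; exact one_le_pow₀ h)
      refine h2.trans ?_
      rw [abs_of_nonneg (mul_nonneg (abs_nonneg (u p.1)) (abs_nonneg (up p.2))), abs_mul]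
      exact mul_le_mul_of_nonneg_right ha (abs_nonneg _)
    · simp only [h, if_false, abs_zero]
      positivity
  have hF1int : Integrable F1 (volume.prod volume) := by
    refine hdomint.mono (haesm_far u up hum hupm) (Filter.Eventually.of_forall fun p => ?_)
    exact hfarbound (u p.1) p (Real.norm_eq_abs (u p.1)).symm.le
  have hF2int : Integrable F2 (volume.prod volume) := by
    refine hdomint.mono (haesm_far up up hupm hupm) (Filter.Eventually.of_forall fun p => ?_)
    exact hfarbound (up p.1) p ((Real.norm_eq_abs (up p.1)).symm.le.trans (hup_le p.1))
  have hF12 : ∀ p, F1 p ≤ F2 p := by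
    intro p
    simp only [hF1_def, hF2_def]
    by_cases h : 1 ≤ ‖p.1 - p.2‖
    · simp only [h, if_true]
      refine div_le_div_nonneg_den ?_ (by positivity)
      exact mul_le_mul_of_nonneg_right (le_max_left _ _) (le_max_right _ _)
    · simp [h]
  have hfar : farForm N u up ≤ farForm N up up := by
    unfold farForm
    refine mul_le_mul_of_nonneg_left ?_ hcN
    rw [integral_integral hF1int, integral_integral hF2int]
    exact integral_mono hF1int hF2int hF12
  -- rho term
  have hrho : (∫ x, u x * up x) = ∫ x, up x * up x := by
    congr 1
    funext x
    rcases le_total (u x) 0 with h | h <;>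
      simp [hup_def, max_eq_left, max_eq_right, h]
  show logLapForm N ρ up up ≤ logLapForm N ρ u up
  unfold logLapForm
  rw [hrho]
  linarith
end
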